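/- If the Hessian H = ∇²φ and the matrix H(y) + ∇H(y)(y − x) are positive semidefinite for all x, y ∈ X, then the Bregman divergence D_φ(x, ·) is convex in its second argument; in particular, for nonnegative weights θ_j summing to 1, D_φ(x, Σ_j θ_j y_j) ≤ Σ_j θ_j D_φ(x, y_j). -/

import Mathlib

open RealInnerProductSpace

/-- Separate convexity of the Bregman divergence in its second argument under the
Hessian positivity conditions of Assumption 1. -/
theorem bregman_separately_convex (n : ℕ) (σ : ℝ) (hσ : 0 < σ)
    (X : Set (EuclideanSpace ℝ (Fin n))) (hX : Convex ℝ X)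
    (φ : EuclideanSpace ℝ (Fin n) → ℝ)
    (hC3 : ContDiff ℝ 3 φ)
    (gφ : EuclideanSpace ℝ (Fin n) → EuclideanSpace ℝ (Fin n))
    (hgrad : ∀ x, HasGradientAt φ (gφ x) x)
    (hsc : ∀ x y, φ x ≥ φ y + ⟪gφ y, x - y⟫ + σ / 2 * ‖x - y‖ ^ 2)
    (H : EuclideanSpace ℝ (Fin n) → EuclideanSpace ℝ (Fin n) →L[ℝ] EuclideanSpace ℝ (Fin n))
    (hH : ∀ y, HasFDerivAt gφ (H y) y)
    (H' : EuclideanSpace ℝ (Fin n) →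
      EuclideanSpace ℝ (Fin n) →L[ℝ] EuclideanSpace ℝ (Fin n) →L[ℝ] EuclideanSpace ℝ (Fin n))
    (hH' : ∀ y, HasFDerivAt H (H' y) y)
    (hpsd : ∀ y ∈ X, ∀ v, 0 ≤ ⟪H y v, v⟫)
    (hpsd2 : ∀ x ∈ X, ∀ y ∈ X, ∀ v, 0 ≤ ⟪H y v + H' y (y - x) v, v⟫)
    (D : EuclideanSpace ℝ (Fin n) → EuclideanSpace ℝ (Fin n) → ℝ)
    (hD : ∀ x y, D x y = φ x - φ y - ⟪gφ y, x - y⟫) :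
    ∀ x ∈ X, ConvexOn ℝ X (fun y => D x y) ∧
      ∀ (N : ℕ) (θ : Fin N → ℝ) (y : Fin N → EuclideanSpace ℝ (Fin n)),
        (∀ j, 0 ≤ θ j) → (∑ j, θ j) = 1 → (∀ j, y j ∈ X) →
        D x (∑ j, θ j • y j) ≤ ∑ j, θ j * D x (y j) := by
  have hφ' : ∀ y, HasFDerivAt φ
      (InnerProductSpace.toDual ℝ (EuclideanSpace ℝ (Fin n)) (gφ y)) y :=
    fun y => (hgrad y).hasFDerivAt
  set L : EuclideanSpace ℝ (Fin n) →L[ℝ] (EuclideanSpace ℝ (Fin n) →L[ℝ] ℝ) :=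
    (InnerProductSpace.toDual ℝ
      (EuclideanSpace ℝ (Fin n))).toContinuousLinearEquiv.toContinuousLinearMap with hL
  have hLa : ∀ u w : EuclideanSpace ℝ (Fin n), L u w = ⟪u, w⟫ := fun u w => rfl
  have Hsym : ∀ y v w, ⟪H y v, w⟫ = ⟪H y w, v⟫ := by
    intro y v w
    have h2 : HasFDerivAt (fun z =>
        InnerProductSpace.toDual ℝ (EuclideanSpace ℝ (Fin n)) (gφ z)) (L ∘L H y) y :=
      L.hasFDerivAt.comp y (hH y)
    have := second_derivative_symmetric hφ' h2 v w
    simpa [hLa] using this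
  have H'sym1 : ∀ y a b, H' y a b = H' y b a := fun y => second_derivative_symmetric hH (hH' y)
  have H'sym2 : ∀ y a b w, ⟪H' y a b, w⟫ = ⟪H' y a w, b⟫ := by
    intro y a b w
    set A1 : (EuclideanSpace ℝ (Fin n) →L[ℝ] EuclideanSpace ℝ (Fin n)) →L[ℝ] ℝ :=
      (innerSL ℝ w).comp (ContinuousLinearMap.apply ℝ (EuclideanSpace ℝ (Fin n)) b) with hA1
    set A2 : (EuclideanSpace ℝ (Fin n) →L[ℝ] EuclideanSpace ℝ (Fin n)) →L[ℝ] ℝ :=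
      (innerSL ℝ b).comp (ContinuousLinearMap.apply ℝ (EuclideanSpace ℝ (Fin n)) w) with hA2
    have h1 : HasFDerivAt (fun z => (⟪w, H z b⟫ : ℝ)) (A1 ∘L H' y) y :=
      A1.hasFDerivAt.comp y (hH' y)
    have h2 : HasFDerivAt (fun z => (⟪b, H z w⟫ : ℝ)) (A2 ∘L H' y) y :=
      A2.hasFDerivAt.comp y (hH' y)
    have heq : (fun z => (⟪w, H z b⟫ : ℝ)) = fun z => (⟪b, H z w⟫ : ℝ) := by
      funext z
      calc (⟪w, H z b⟫ : ℝ) = ⟪H z b, w⟫ := real_inner_comm _ _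
        _ = ⟪H z w, b⟫ := Hsym z b w
        _ = ⟪b, H z w⟫ := real_inner_comm _ _
    rw [heq] at h1
    have huniq := h1.unique h2
    have happ := congrArg (fun (T : EuclideanSpace ℝ (Fin n) →L[ℝ] ℝ) => T a) huniq
    simp only [ContinuousLinearMap.comp_apply, hA1, hA2, innerSL_apply_apply,
      ContinuousLinearMap.apply_apply] at happ
    calc (⟪H' y a b, w⟫ : ℝ) = ⟪w, H' y a b⟫ := real_inner_comm _ _
      _ = ⟪b, H' y a w⟫ := happ
      _ = ⟪H' y a w, b⟫ := real_inner_comm _ _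
  intro x hx
  have key : ∀ c ∈ X, ∀ v, 0 ≤ ⟪H c v, v⟫ + ⟪H' c v v, c - x⟫ := by
    intro c hc v
    have e1 : (⟪H' c v v, c - x⟫ : ℝ) = ⟪H' c (c - x) v, v⟫ := by
      calc (⟪H' c v v, c - x⟫ : ℝ) = ⟪H' c v (c - x), v⟫ := H'sym2 c v v (c - x)
        _ = ⟪H' c (c - x) v, v⟫ := by rw [H'sym1 c v (c - x)]
    have h0 := hpsd2 x hx c hc v
    rw [inner_add_left] at h0
    rw [e1]
    linarith
  have hconv : ConvexOn ℝ X (fun y => D x y) := by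
    refine ⟨hX, ?_⟩
    intro y hy z hz a b ha hb hab
    set v : EuclideanSpace ℝ (Fin n) := z - y with hv
    set c : ℝ → EuclideanSpace ℝ (Fin n) := fun t => y + t • v with hcdef
    have hc : ∀ t : ℝ, HasDerivAt c v t := by
      intro t
      simpa [hcdef] using ((hasDerivAt_id t).smul_const v).const_add y
    have hcm : ∀ t : ℝ, 0 ≤ t → t ≤ 1 → c t ∈ X := by
      intro t ht0 ht1
      have hct : c t = (1 - t) • y + t • z := by
        simp only [hcdef, hv, smul_sub, sub_smul, one_smul]; abel
      rw [hct]
      exact hX hy hz (by linarith) ht0 (by ring)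
    have hDc : ∀ t : ℝ, HasDerivAt (fun t => D x (c t)) (⟪H (c t) v, c t - x⟫) t := by
      intro t
      have hφc : HasDerivAt (fun t => φ (c t)) (⟪gφ (c t), v⟫) t := by
        have := (hφ' (c t)).comp_hasDerivAt t (hc t)
        exact this
      have hgc : HasDerivAt (fun t => gφ (c t)) (H (c t) v) t :=
        (hH (c t)).comp_hasDerivAt t (hc t)
      have hxc : HasDerivAt (fun t => x - c t) (-v) t := by
        have h := (hasDerivAt_const t x).sub (hc t)
        rw [zero_sub] at h
        exact h
      have hinner := HasDerivAt.inner ℝ hgc hxc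
      have hfun : (fun t => D x (c t)) =
          fun t => φ x - φ (c t) - ⟪gφ (c t), x - c t⟫ := by
        funext t; rw [hD]
      rw [hfun]
      have hder := ((hasDerivAt_const t (φ x)).sub hφc).sub hinner
      convert hder using 1
      · rfl
      · rfl
      · rfl
      have e2 : x - c t = -(c t - x) := by abel
      rw [e2, inner_neg_right, inner_neg_right]
      ring
    have hD2c : ∀ t : ℝ, HasDerivAt (fun t => (⟪H (c t) v, c t - x⟫ : ℝ))
        (⟪H (c t) v, v⟫ + ⟪H' (c t) v v, c t - x⟫) t := by
      intro t
      have hHc : HasDerivAt (fun t => H (c t)) (H' (c t) v) t :=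
        (hH' (c t)).comp_hasDerivAt t (hc t)
      have hHcv : HasDerivAt (fun t => H (c t) v) (H' (c t) v v) t := by
        simpa using hHc.clm_apply (hasDerivAt_const t v)
      have hcx : HasDerivAt (fun t => c t - x) v t := (hc t).sub_const x
      simpa [real_inner_comm] using HasDerivAt.inner ℝ hHcv hcx
    have hcont : ContinuousOn (fun t => D x (c t)) (Set.Icc (0:ℝ) 1) :=
      (Continuous.continuousOn (continuous_iff_continuousAt.2
        fun t => (hDc t).continuousAt))
    have h1d : ConvexOn ℝ (Set.Icc (0:ℝ) 1) (fun t => D x (c t)) := by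
      refine convexOn_of_hasDerivWithinAt2_nonneg (convex_Icc 0 1) hcont
        (fun t _ => (hDc t).hasDerivWithinAt)
        (fun t _ => (hD2c t).hasDerivWithinAt) ?_
      intro t ht
      rw [interior_Icc] at ht
      exact key (c t) (hcm t ht.1.le ht.2.le) v
    have hmem0 : (0:ℝ) ∈ Set.Icc (0:ℝ) 1 := by norm_num
    have hmem1 : (1:ℝ) ∈ Set.Icc (0:ℝ) 1 := by norm_num
    have hineq := h1d.2 hmem0 hmem1 ha hb hab
    have hc0 : c 0 = y := by simp [hcdef]
    have hc1 : c 1 = z := by simp [hcdef, hv]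
    have hcb : c b = a • y + b • z := by
      have ha' : a = 1 - b := by linarith
      simp only [hcdef, hv, smul_sub, ha', sub_smul, one_smul]
      abel
    have hb2 : a • (0:ℝ) + b • 1 = b := by simp
    simp only [hb2] at hineq
    rw [hcb] at hineq
    simpa only [hc0, hc1, smul_eq_mul] using hineq
  refine ⟨hconv, ?_⟩
  intro N θ y hθ hθ1 hyX
  have := hconv.map_sum_le (t := Finset.univ) (w := θ) (p := y)
    (fun j _ => hθ j) hθ1 (fun j _ => hyX j)
  simpa [smul_eq_mul] using this
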